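/- Let r ≥ 0 and let ρ be a probability measure on ℝ^d supported in B_r. For every n ≥ 1 and p = d, there exist points x_1,…,x_n ∈ ℝ^d such that the empirical measure μ^(n) = n^{-1} Σ_{k=1}^n δ_{x_k} satisfies W_d(μ^(n), ρ) ≤ 4r · ((1 + ln n)/n)^{1/d}. -/

import Mathlib

open MeasureTheory Metric
open scoped ENNReal NNReal

/-- The `p`-th power Wasserstein transport cost between two measures of equal mass,
defined as the infimum over couplings of `∫ ‖x - y‖ ^ p`. -/
noncomputable def WpCost {d : ℕ} (p : ℝ) (μ ν : Measure (Fin d → ℝ)) : ℝ≥0∞ :=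
  ⨅ (π : Measure ((Fin d → ℝ) × (Fin d → ℝ))) (_ : π.map Prod.fst = μ)
    (_ : π.map Prod.snd = ν), ∫⁻ q, ENNReal.ofReal (‖q.1 - q.2‖ ^ p) ∂π

namespace EQC
open Set


/-- clamped grid index of a real number in `[-r, r]` for an `m`-cell grid. -/
noncomputable def idx (m : ℕ) (r t : ℝ) : ℕ :=
  min (⌊(t + r) * m / (2 * r)⌋.toNat) (m - 1)

lemma idx_lt (m : ℕ) (hm : 1 ≤ m) (r t : ℝ) : idx m r t < m := by
  have := Nat.min_le_right (⌊(t + r) * m / (2 * r)⌋.toNat) (m - 1); unfold idx; omega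

lemma measurable_idx (m : ℕ) (r : ℝ) : Measurable (idx m r) := by
  have h1 : Measurable fun t : ℝ => ⌊(t + r) * m / (2 * r)⌋ := by
    apply Measurable.floor
    fun_prop
  exact (measurable_from_top (f := fun z : ℤ => min z.toNat (m - 1))).comp h1

lemma abs_sub_le_of_idx_eq {m : ℕ} (hm : 1 ≤ m) {r s t : ℝ} (hr : 0 ≤ r)
    (hs : |s| ≤ r) (ht : |t| ≤ r) (h : idx m r s = idx m r t) :
    |s - t| ≤ 2 * r / m := by
  rcases eq_or_lt_of_le hr with hr0 | hr0
  · have h1 : s = 0 := by rw [← abs_nonpos_iff]; rw [← hr0] at hs; exact hs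
    have h2 : t = 0 := by rw [← abs_nonpos_iff]; rw [← hr0] at ht; exact ht
    simp [h1, h2]; positivity
  · have hmpos : (0:ℝ) < m := by exact_mod_cast hm
    set j := idx m r s with hj
    -- key claim for any point
    have key : ∀ w : ℝ, |w| ≤ r → idx m r w = j →
        (j : ℝ) ≤ (w + r) * m / (2 * r) ∧ (w + r) * m / (2 * r) ≤ j + 1 := by
      intro w hw hwj
      set u := (w + r) * m / (2 * r) with hu
      have hw1 : -r ≤ w := (abs_le.mp hw).1
      have hu0 : 0 ≤ u :=
        div_nonneg (mul_nonneg (by linarith) (by positivity)) (by linarith)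
      have hum : u ≤ m := by
        rw [div_le_iff₀ (by linarith)]
        have : w ≤ r := (abs_le.mp hw).2
        nlinarith
      have hfl : (0:ℤ) ≤ ⌊u⌋ := Int.floor_nonneg.mpr hu0
      have hidx : idx m r w = min (⌊u⌋.toNat) (m - 1) := rfl
      have htn : ((⌊u⌋.toNat : ℝ)) ≤ u := by
        rw [← Int.cast_natCast, Int.toNat_of_nonneg hfl]; exact Int.floor_le u
      constructor
      · have : j ≤ ⌊u⌋.toNat := by
          rw [← hwj]; exact Nat.min_le_left _ _
        calc (j:ℝ) ≤ (⌊u⌋.toNat : ℝ) := by exact_mod_cast this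
          _ ≤ u := htn
      · rcases le_or_gt (⌊u⌋.toNat) (m - 1) with hle | hlt
        · have hj' : j = ⌊u⌋.toNat := by rw [← hwj, hidx]; omega
          have : u < ⌊u⌋ + 1 := Int.lt_floor_add_one u
          rw [hj']
          have : (⌊u⌋.toNat : ℝ) = (⌊u⌋ : ℝ) := by
            rw [← Int.cast_natCast, Int.toNat_of_nonneg hfl]
          rw [this]; linarith [Int.lt_floor_add_one u]
        · have hj' : j = m - 1 := by rw [← hwj, hidx]; omega
          rw [hj']
          have : ((m - 1 : ℕ) : ℝ) + 1 = m := by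
            have : (1:ℕ) ≤ m := hm
            push_cast [Nat.cast_sub this]; ring
          rw [this]; exact hum
    have h1 := key s hs hj.symm
    have h2 := key t ht h.symm
    have e1 : (s + r) * m / (2 * r) - (t + r) * m / (2 * r) = (s - t) * m / (2*r) := by
      field_simp; ring
    have habs : |(s - t) * m / (2 * r)| ≤ 1 := by
      rw [abs_le]; constructor <;> [linarith [h1.1, h1.2, h2.1, h2.2, e1]; linarith [h1.1, h1.2, h2.1, h2.2, e1]]
    rw [abs_div, abs_mul] at habs
    rw [le_div_iff₀ hmpos]
    have h2r : |2 * r| = 2 * r := abs_of_pos (by linarith)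
    have hm' : |(m:ℝ)| = (m:ℝ) := abs_of_pos hmpos
    rw [h2r, hm'] at habs
    have := (div_le_one (by linarith : (0:ℝ) < 2*r)).mp habs
    linarith


def cell (d m : ℕ) (r : ℝ) (c : Fin d → ℕ) : Set (Fin d → ℝ) :=
  {x | ∀ i, idx m r (x i) = c i}

lemma measurableSet_cell (d m : ℕ) (r : ℝ) (c : Fin d → ℕ) :
    MeasurableSet (cell d m r c) := by
  have : cell d m r c = ⋂ i, (fun x : Fin d → ℝ => x i) ⁻¹' (idx m r ⁻¹' {c i}) := by
    ext x; simp [cell, Set.mem_iInter]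
  rw [this]
  exact MeasurableSet.iInter fun i =>
    (measurable_pi_apply i) ((measurable_idx m r) (measurableSet_singleton _))

lemma norm_sub_le_of_mem_cell {d m : ℕ} (hm : 1 ≤ m) {r : ℝ} (hr : 0 ≤ r)
    {c : Fin d → ℕ} {x y : Fin d → ℝ} (hx : x ∈ cell d m r c) (hy : y ∈ cell d m r c)
    (hx' : x ∈ closedBall 0 r) (hy' : y ∈ closedBall 0 r) :
    ‖x - y‖ ≤ 2 * r / m := by
  have hnn : (0:ℝ) ≤ 2 * r / m := by positivity
  rw [show x - y = fun i => x i - y i from rfl]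
  apply pi_norm_le_iff_of_nonneg hnn |>.mpr
  intro i
  rw [Real.norm_eq_abs]
  apply abs_sub_le_of_idx_eq hm hr
  · have := mem_closedBall_zero_iff.mp hx'
    calc |x i| = ‖x i‖ := (Real.norm_eq_abs _).symm
      _ ≤ ‖x‖ := norm_le_pi_norm x i
      _ ≤ r := this
  · have := mem_closedBall_zero_iff.mp hy'
    calc |y i| = ‖y i‖ := (Real.norm_eq_abs _).symm
      _ ≤ ‖y‖ := norm_le_pi_norm y i
      _ ≤ r := this
  · rw [hx i, hy i]

lemma sum_cells {d m : ℕ} (hm : 1 ≤ m) (r : ℝ) (μ : Measure (Fin d → ℝ)) :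
    ∑ c : Fin d → Fin m, μ (cell d m r fun i => (c i : ℕ)) = μ Set.univ := by
  classical
  set f : (Fin d → ℝ) → (Fin d → Fin m) := fun x i => ⟨idx m r (x i), idx_lt m hm r (x i)⟩
    with hf
  have hcell : ∀ c : Fin d → Fin m, cell d m r (fun i => (c i : ℕ)) = f ⁻¹' {c} := by
    intro c; ext x
    simp only [cell, Set.mem_setOf_eq, Set.mem_preimage, Set.mem_singleton_iff, hf,
      funext_iff, Fin.ext_iff]
  have := MeasureTheory.sum_measure_preimage_singleton (μ := μ) (f := f) Finset.univ
    (fun c _ => by rw [← hcell c]; exact measurableSet_cell d m r _)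
  simp only [hcell]
  rw [this]
  simp

lemma exists_good_cell {d m : ℕ} (hd : 1 ≤ d) (hm : 1 ≤ m) (r : ℝ)
    (μ : Measure (Fin d → ℝ)) :
    ∃ c : Fin d → Fin m, μ Set.univ / ((m : ℝ≥0∞) ^ d) ≤ μ (cell d m r fun i => (c i : ℕ)) := by
  classical
  have hne : (Finset.univ : Finset (Fin d → Fin m)).Nonempty := by
    have : Nonempty (Fin d → Fin m) := ⟨fun _ => ⟨0, hm⟩⟩
    exact Finset.univ_nonempty
  obtain ⟨c, _, hc⟩ := Finset.exists_max_image Finset.univ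
    (fun c : Fin d → Fin m => μ (cell d m r fun i => (c i : ℕ))) hne
  refine ⟨c, ENNReal.div_le_of_le_mul ?_⟩
  calc μ Set.univ = ∑ c' : Fin d → Fin m, μ (cell d m r fun i => (c' i : ℕ)) :=
        (sum_cells hm r μ).symm
    _ ≤ (Finset.univ : Finset (Fin d → Fin m)).card •
          μ (cell d m r fun i => (c i : ℕ)) :=
        Finset.sum_le_card_nsmul _ _ _ (fun c' _ => hc c' (Finset.mem_univ c'))
    _ = μ (cell d m r fun i => (c i : ℕ)) * (m:ℝ≥0∞) ^ d := by
        simp [Fintype.card_fun, nsmul_eq_mul, mul_comm]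

noncomputable def gridm (d k : ℕ) : ℕ := max 1 ⌊(k:ℝ) ^ ((1:ℝ)/d)⌋₊

lemma one_le_gridm (d k : ℕ) : 1 ≤ gridm d k := le_max_left _ _

lemma gridm_pow_le {d k : ℕ} (hd : 1 ≤ d) (hk : 1 ≤ k) : gridm d k ^ d ≤ k := by
  have hx1 : (1:ℝ) ≤ (k:ℝ) ^ ((1:ℝ)/d) :=
    Real.one_le_rpow (by exact_mod_cast hk) (by positivity)
  have hfl : 1 ≤ ⌊(k:ℝ) ^ ((1:ℝ)/d)⌋₊ := Nat.le_floor (by exact_mod_cast hx1)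
  have hg : gridm d k = ⌊(k:ℝ) ^ ((1:ℝ)/d)⌋₊ := max_eq_right hfl
  rw [hg]
  have hle : ((⌊(k:ℝ) ^ ((1:ℝ)/d)⌋₊ : ℝ)) ≤ (k:ℝ) ^ ((1:ℝ)/d) :=
    Nat.floor_le (by positivity)
  have hpow : ((⌊(k:ℝ) ^ ((1:ℝ)/d)⌋₊ : ℝ)) ^ d ≤ ((k:ℝ) ^ ((1:ℝ)/d)) ^ d :=
    pow_le_pow_left₀ (by positivity) hle d
  have hxk : ((k:ℝ) ^ ((1:ℝ)/d)) ^ d = (k:ℝ) := by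
    rw [← Real.rpow_natCast ((k:ℝ) ^ ((1:ℝ)/d)) d, ← Real.rpow_mul (by positivity)]
    rw [one_div, inv_mul_cancel₀ (by exact_mod_cast Nat.one_le_iff_ne_zero.mp hd : (d:ℝ) ≠ 0)]
    exact Real.rpow_one _
  rw [hxk] at hpow
  exact_mod_cast hpow.trans_eq rfl

lemma rpow_le_two_mul_gridm {d k : ℕ} (hd : 1 ≤ d) (hk : 1 ≤ k) :
    (k:ℝ) ^ ((1:ℝ)/d) ≤ 2 * gridm d k := by
  set x := (k:ℝ) ^ ((1:ℝ)/d) with hx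
  have hx1 : (1:ℝ) ≤ x := Real.one_le_rpow (by exact_mod_cast hk) (by positivity)
  have hg1 : (1:ℝ) ≤ (gridm d k : ℝ) := by exact_mod_cast one_le_gridm d k
  rcases le_or_gt x 2 with h2 | h2
  · linarith
  · have : (x - 1) < ⌊x⌋₊ := Nat.sub_one_lt_floor x
    have hgf : (⌊x⌋₊ : ℝ) ≤ (gridm d k : ℝ) := by
      have : ⌊x⌋₊ ≤ gridm d k := le_max_right _ _
      exact_mod_cast this
    linarith


noncomputable def goodCell (d m : ℕ) (hd : 1 ≤ d) (hm : 1 ≤ m) (r : ℝ)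
    (μ : Measure (Fin d → ℝ)) : Fin d → ℕ :=
  fun i => ((exists_good_cell hd hm r μ).choose i : ℕ)

lemma goodCell_spec (d m : ℕ) (hd : 1 ≤ d) (hm : 1 ≤ m) (r : ℝ)
    (μ : Measure (Fin d → ℝ)) :
    μ Set.univ / ((m : ℝ≥0∞) ^ d) ≤ μ (cell d m r (goodCell d m hd hm r μ)) :=
  (exists_good_cell hd hm r μ).choose_spec

noncomputable def stepCell (d k : ℕ) (hd : 1 ≤ d) (r : ℝ)
    (μ : Measure (Fin d → ℝ)) : Set (Fin d → ℝ) :=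
  cell d (gridm d k) r (goodCell d (gridm d k) hd (one_le_gridm d k) r μ)

lemma measurableSet_stepCell (d k : ℕ) (hd : 1 ≤ d) (r : ℝ) (μ : Measure (Fin d → ℝ)) :
    MeasurableSet (stepCell d k hd r μ) := measurableSet_cell _ _ _ _

noncomputable def pieceOf (d n k : ℕ) (hd : 1 ≤ d) (r : ℝ)
    (μ : Measure (Fin d → ℝ)) : Measure (Fin d → ℝ) :=
  ((n : ℝ≥0∞)⁻¹ / μ (stepCell d k hd r μ)) • μ.restrict (stepCell d k hd r μ)

noncomputable def remSeq (d n : ℕ) (hd : 1 ≤ d) (r : ℝ) (ρ : Measure (Fin d → ℝ)) :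
    ℕ → Measure (Fin d → ℝ)
  | 0 => ρ
  | j+1 => remSeq d n hd r ρ j - pieceOf d n (n - j) hd r (remSeq d n hd r ρ j)

noncomputable def pieceAt (d n : ℕ) (hd : 1 ≤ d) (r : ℝ) (ρ : Measure (Fin d → ℝ))
    (j : ℕ) : Measure (Fin d → ℝ) :=
  pieceOf d n (n - j) hd r (remSeq d n hd r ρ j)

section Invariants

lemma nne0 {n : ℕ} (hn : 1 ≤ n) : ((n:ℝ≥0∞)) ≠ 0 := Nat.cast_ne_zero.mpr (by omega)

lemma ninv_pos (n : ℕ) : (0:ℝ≥0∞) < (n:ℝ≥0∞)⁻¹ :=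
  ENNReal.inv_pos.mpr (ENNReal.natCast_ne_top n)

lemma ninv_lt_top {n : ℕ} (hn : 1 ≤ n) : (n:ℝ≥0∞)⁻¹ < ⊤ :=
  ENNReal.inv_lt_top.mpr (by exact_mod_cast Nat.pos_of_ne_zero (by omega))

/-- core facts about one extraction step -/
lemma pieceOf_spec {d n : ℕ} (hd : 1 ≤ d) (hn : 1 ≤ n) (r : ℝ)
    {ρ : Measure (Fin d → ℝ)} [IsProbabilityMeasure ρ]
    {k : ℕ} (hk1 : 1 ≤ k) {μ : Measure (Fin d → ℝ)}
    (hle : μ ≤ ρ) (hmass : μ Set.univ = (k : ℝ≥0∞) / n) :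
    (n:ℝ≥0∞)⁻¹ ≤ μ (stepCell d k hd r μ) ∧
    pieceOf d n k hd r μ Set.univ = (n:ℝ≥0∞)⁻¹ ∧
    pieceOf d n k hd r μ ≤ μ ∧
    pieceOf d n k hd r μ (stepCell d k hd r μ)ᶜ = 0 := by
  set C := stepCell d k hd r μ with hC
  have hCmeas : MeasurableSet C := measurableSet_stepCell _ _ _ _ _
  have hkne : (k:ℝ≥0∞) ≠ 0 := Nat.cast_ne_zero.mpr (by omega)
  have hCbig : (n : ℝ≥0∞)⁻¹ ≤ μ C := by
    have h1 := goodCell_spec d (gridm d k) hd (one_le_gridm d k) r μ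
    refine le_trans ?_ h1
    rw [hmass]
    have hmd : ((gridm d k : ℝ≥0∞) ^ d) ≤ (k : ℝ≥0∞) := by
      rw [show ((gridm d k : ℝ≥0∞) ^ d) = ((gridm d k ^ d : ℕ) : ℝ≥0∞) by push_cast; ring]
      exact_mod_cast gridm_pow_le hd hk1
    calc (n : ℝ≥0∞)⁻¹ = ((k : ℝ≥0∞) / n) / k := by
          rw [div_eq_mul_inv, div_eq_mul_inv, mul_right_comm,
            ENNReal.mul_inv_cancel hkne (ENNReal.natCast_ne_top k), one_mul]
      _ ≤ ((k : ℝ≥0∞) / n) / ((gridm d k : ℝ≥0∞) ^ d) := ENNReal.div_le_div le_rfl hmd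
  have hCne0 : μ C ≠ 0 := ((ninv_pos n).trans_le hCbig).ne'
  have hCfin : μ C ≠ ⊤ := by
    have h2 : μ C ≤ ρ C := Measure.le_iff'.mp hle C
    exact ((h2.trans prob_le_one).trans_lt (by norm_num)).ne
  refine ⟨hCbig, ?_, ?_, ?_⟩
  · rw [pieceOf, Measure.smul_apply, Measure.restrict_apply MeasurableSet.univ,
      Set.univ_inter, smul_eq_mul]
    exact ENNReal.div_mul_cancel hCne0 hCfin
  · refine Measure.le_iff.mpr fun s hs => ?_
    rw [pieceOf, Measure.smul_apply, Measure.restrict_apply hs, smul_eq_mul]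
    calc ((n:ℝ≥0∞)⁻¹ / μ C) * μ (s ∩ C) ≤ 1 * μ s := by
          gcongr
          · exact ENNReal.div_le_of_le_mul (by rw [one_mul]; exact hCbig)
          · exact Set.inter_subset_left
      _ = μ s := one_mul _
  · rw [pieceOf, Measure.smul_apply, Measure.restrict_apply hCmeas.compl, smul_eq_mul,
      Set.compl_inter_self, measure_empty, mul_zero]

lemma remSeq_invariant {d n : ℕ} (hd : 1 ≤ d) (hn : 1 ≤ n) (r : ℝ)
    {ρ : Measure (Fin d → ℝ)} [IsProbabilityMeasure ρ] :
    ∀ j, j ≤ n → remSeq d n hd r ρ j ≤ ρ ∧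
      remSeq d n hd r ρ j Set.univ = ((n - j : ℕ) : ℝ≥0∞) / n := by
  intro j
  induction j with
  | zero =>
    intro _
    refine ⟨le_rfl, ?_⟩
    show ρ Set.univ = ((n - 0 : ℕ) : ℝ≥0∞) / n
    rw [measure_univ, Nat.sub_zero, ENNReal.div_self (nne0 hn) (ENNReal.natCast_ne_top n)]
  | succ j ih =>
    intro hj1
    obtain ⟨hle, hmass⟩ := ih (by omega)
    have hk1 : 1 ≤ n - j := by omega
    obtain ⟨hCbig, hpmass, hple, hpc⟩ := pieceOf_spec hd hn r hk1 hle hmass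
    haveI hpfin : IsFiniteMeasure (pieceOf d n (n - j) hd r (remSeq d n hd r ρ j)) :=
      ⟨by rw [hpmass]; exact ninv_lt_top hn⟩
    refine ⟨?_, ?_⟩
    · show remSeq d n hd r ρ j - pieceOf d n (n - j) hd r (remSeq d n hd r ρ j) ≤ ρ
      exact (Measure.sub_le).trans hle
    · show (remSeq d n hd r ρ j - pieceOf d n (n - j) hd r (remSeq d n hd r ρ j)) Set.univ = _
      rw [Measure.sub_apply MeasurableSet.univ hple, hmass, hpmass]
      have hrw : ((n - j : ℕ) : ℝ≥0∞) = ((n - (j+1) : ℕ) : ℝ≥0∞) + 1 := by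
        have h3 : (n - j) = (n - (j+1)) + 1 := by omega
        rw [h3]; push_cast; ring
      rw [hrw, ENNReal.add_div, ← one_div, ENNReal.add_sub_cancel_right
        ((ENNReal.div_lt_top ENNReal.one_ne_top (nne0 hn)).ne)]

lemma telescoping {d n : ℕ} (hd : 1 ≤ d) (hn : 1 ≤ n) (r : ℝ)
    {ρ : Measure (Fin d → ℝ)} [IsProbabilityMeasure ρ] :
    ∀ j, j ≤ n → remSeq d n hd r ρ j + ∑ i ∈ Finset.range j, pieceAt d n hd r ρ i = ρ := by
  intro j
  induction j with
  | zero => intro _; simp [remSeq]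
  | succ j ih =>
    intro hj1
    obtain ⟨hle, hmass⟩ := remSeq_invariant hd hn r (ρ := ρ) j (by omega)
    obtain ⟨hCbig, hpmass, hple, hpc⟩ := pieceOf_spec hd hn r (show 1 ≤ n - j by omega) hle hmass
    haveI hpfin : IsFiniteMeasure (pieceOf d n (n - j) hd r (remSeq d n hd r ρ j)) :=
      ⟨by rw [hpmass]; exact ninv_lt_top hn⟩
    haveI : IsFiniteMeasure (pieceAt d n hd r ρ j) := hpfin
    rw [Finset.sum_range_succ]
    have h2 : remSeq d n hd r ρ (j+1) + pieceAt d n hd r ρ j = remSeq d n hd r ρ j := by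
      show remSeq d n hd r ρ j - pieceAt d n hd r ρ j + pieceAt d n hd r ρ j = _
      exact Measure.sub_add_cancel_of_le hple
    calc remSeq d n hd r ρ (j+1) +
          (∑ i ∈ Finset.range j, pieceAt d n hd r ρ i + pieceAt d n hd r ρ j)
        = remSeq d n hd r ρ (j+1) + pieceAt d n hd r ρ j +
          ∑ i ∈ Finset.range j, pieceAt d n hd r ρ i := by
          rw [add_assoc, add_comm (∑ i ∈ Finset.range j, pieceAt d n hd r ρ i) _]
      _ = remSeq d n hd r ρ j + ∑ i ∈ Finset.range j, pieceAt d n hd r ρ i := by rw [h2]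
      _ = ρ := ih (by omega)

lemma sum_pieces {d n : ℕ} (hd : 1 ≤ d) (hn : 1 ≤ n) (r : ℝ)
    {ρ : Measure (Fin d → ℝ)} [IsProbabilityMeasure ρ] :
    ∑ i ∈ Finset.range n, pieceAt d n hd r ρ i = ρ := by
  have h := telescoping hd hn r (ρ := ρ) n le_rfl
  obtain ⟨-, hmass⟩ := remSeq_invariant hd hn r (ρ := ρ) n le_rfl
  have h0 : remSeq d n hd r ρ n = 0 := by
    rw [← Measure.measure_univ_eq_zero, hmass]; simp
  rw [h0, zero_add] at h
  exact h

end Invariants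

lemma map_finset_sum {α β ι : Type*} [MeasurableSpace α] [MeasurableSpace β]
    {f : α → β} (hf : Measurable f) (s : Finset ι) (μ : ι → Measure α) :
    (∑ i ∈ s, μ i).map f = ∑ i ∈ s, (μ i).map f := by
  classical
  induction s using Finset.induction with
  | empty => simp
  | insert a s hnotmem ih =>
    rw [Finset.sum_insert hnotmem, Finset.sum_insert hnotmem,
      Measure.map_add _ _ hf, ih]


end EQC

open EQC in
theorem empirical_quantization_critical (d n : ℕ) (hd : 1 ≤ d) (hn : 1 ≤ n)
    (r : ℝ) (hr : 0 ≤ r)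
    (ρ : Measure (Fin d → ℝ)) [IsProbabilityMeasure ρ]
    (hsupp : ρ (closedBall 0 r)ᶜ = 0) :
    ∃ x : Fin n → (Fin d → ℝ),
      (WpCost (d : ℝ) ((n : ℝ≥0∞)⁻¹ • ∑ k, Measure.dirac (x k)) ρ) ^ ((1 : ℝ) / d) ≤
        ENNReal.ofReal (4 * r * ((1 + Real.log n) / n) ^ ((1 : ℝ) / d)) := by
  classical
  set E := Fin d → ℝ
  set q : ℕ → Measure E := pieceAt d n hd r ρ with hq
  set S : ℕ → Set E := fun j =>
    stepCell d (n - j) hd r (remSeq d n hd r ρ j) ∩ closedBall 0 r with hS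
  -- facts about pieces
  have hball : MeasurableSet (closedBall (0:E) r) := measurableSet_closedBall
  have key : ∀ j, j < n → q j Set.univ = (n:ℝ≥0∞)⁻¹ ∧ q j ((S j)ᶜ) = 0 := by
    intro j hj
    obtain ⟨hle, hmass⟩ := remSeq_invariant hd hn r (ρ := ρ) j (by omega)
    obtain ⟨hCbig, hpmass, hple, hpc⟩ :=
      pieceOf_spec hd hn r (show 1 ≤ n - j by omega) hle hmass
    refine ⟨hpmass, ?_⟩
    have h1 : q j ((closedBall (0:E) r)ᶜ) = 0 := by
      have h2 : q j ((closedBall (0:E) r)ᶜ) ≤ ρ ((closedBall (0:E) r)ᶜ) :=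
        Measure.le_iff'.mp (hple.trans hle) _
      rw [hsupp] at h2
      exact le_antisymm h2 (zero_le)
    have hsub : (S j)ᶜ ⊆ (stepCell d (n - j) hd r (remSeq d n hd r ρ j))ᶜ ∪
        (closedBall (0:E) r)ᶜ := by
      rw [hS]; intro z hz
      simp only [Set.mem_compl_iff, Set.mem_inter_iff, not_and_or] at hz
      rcases hz with h | h
      · exact Or.inl h
      · exact Or.inr h
    have hpc' : q j ((stepCell d (n - j) hd r (remSeq d n hd r ρ j))ᶜ) = 0 := hpc
    refine le_antisymm ?_ (zero_le)
    calc q j ((S j)ᶜ) ≤ q j ((stepCell d (n - j) hd r (remSeq d n hd r ρ j))ᶜ ∪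
          (closedBall (0:E) r)ᶜ) := measure_mono hsub
      _ ≤ q j ((stepCell d (n - j) hd r (remSeq d n hd r ρ j))ᶜ) +
          q j ((closedBall (0:E) r)ᶜ) := measure_union_le _ _
      _ = 0 := by rw [hpc', h1, add_zero]
  have hSne : ∀ j, j < n → (S j).Nonempty := by
    intro j hj
    by_contra hempty
    rw [Set.not_nonempty_iff_eq_empty] at hempty
    have h1 : q j Set.univ = 0 := by
      have : (S j)ᶜ = Set.univ := by rw [hempty, Set.compl_empty]
      rw [← this]; exact (key j hj).2
    rw [(key j hj).1] at h1
    exact absurd h1 (ninv_pos n).ne'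
  -- the points
  set x : Fin n → E := fun j => (hSne j.val j.isLt).some with hx
  refine ⟨x, ?_⟩
  -- instances
  have hqfin : ∀ j, j < n → IsFiniteMeasure (q j) := by
    intro j hj
    exact ⟨by rw [(key j hj).1]; exact ninv_lt_top hn⟩
  -- the coupling
  set π : Measure (E × E) := ∑ j : Fin n, (Measure.dirac (x j)).prod (q j.val) with hπ
  have hfst : π.map Prod.fst = (n : ℝ≥0∞)⁻¹ • ∑ k, Measure.dirac (x k) := by
    rw [hπ, EQC.map_finset_sum measurable_fst]
    have h1 : ∀ j : Fin n, ((Measure.dirac (x j)).prod (q j.val)).map Prod.fst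
        = (n : ℝ≥0∞)⁻¹ • Measure.dirac (x j) := by
      intro j
      haveI := hqfin j.val j.isLt
      rw [Measure.map_fst_prod, (key j.val j.isLt).1]
    rw [Finset.sum_congr rfl fun j _ => h1 j, ← Finset.smul_sum]
  have hsnd : π.map Prod.snd = ρ := by
    rw [hπ, EQC.map_finset_sum measurable_snd]
    have h1 : ∀ j : Fin n, ((Measure.dirac (x j)).prod (q j.val)).map Prod.snd = q j.val := by
      intro j
      haveI := hqfin j.val j.isLt
      rw [Measure.map_snd_prod]
      simp
    rw [Finset.sum_congr rfl fun j _ => h1 j]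
    rw [show ∑ j : Fin n, q j.val = ∑ i ∈ Finset.range n, q i from
      Fin.sum_univ_eq_sum_range _ n]
    exact sum_pieces hd hn r
  -- measurability of the cost integrand
  have hg : Measurable fun z : E × E => ENNReal.ofReal (‖z.1 - z.2‖ ^ (d:ℝ)) := by
    apply Measurable.ennreal_ofReal
    exact (Real.continuous_rpow_const (by positivity)).measurable.comp
      ((measurable_fst.sub measurable_snd).norm)
  -- cost of the coupling
  have hcost : (∫⁻ z, ENNReal.ofReal (‖z.1 - z.2‖ ^ (d:ℝ)) ∂π)
      ≤ ∑ j : Fin n, ENNReal.ofReal ((2 * r / gridm d (n - j.val)) ^ (d:ℝ)) * (n:ℝ≥0∞)⁻¹ := by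
    rw [hπ, lintegral_finset_sum_measure]
    apply Finset.sum_le_sum
    intro j _
    haveI := hqfin j.val j.isLt
    rw [lintegral_prod _ hg.aemeasurable, lintegral_dirac' _ (hg.lintegral_prod_right')]
    -- bound the inner integral
    have hbound : ∀ᵐ b ∂(q j.val),
        ENNReal.ofReal (‖x j - b‖ ^ (d:ℝ)) ≤
        ENNReal.ofReal ((2 * r / gridm d (n - j.val)) ^ (d:ℝ)) := by
      rw [Filter.eventually_iff, mem_ae_iff]
      apply measure_mono_null _ ((key j.val j.isLt).2)
      intro b hb
      simp only [Set.mem_compl_iff]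
      intro hbS
      apply hb
      simp only [Set.mem_setOf_eq]
      have hxj : x j ∈ S j.val := (hSne j.val j.isLt).some_mem
      have hnorm : ‖x j - b‖ ≤ 2 * r / gridm d (n - j.val) :=
        norm_sub_le_of_mem_cell (one_le_gridm d (n - j.val)) hr
          hxj.1 hbS.1 hxj.2 hbS.2
      exact ENNReal.ofReal_le_ofReal
        (Real.rpow_le_rpow (norm_nonneg _) hnorm (by positivity))
    calc ∫⁻ b, ENNReal.ofReal (‖x j - b‖ ^ (d:ℝ)) ∂(q j.val)
        ≤ ∫⁻ _b, ENNReal.ofReal ((2 * r / gridm d (n - j.val)) ^ (d:ℝ)) ∂(q j.val) :=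
          lintegral_mono_ae hbound
      _ = ENNReal.ofReal ((2 * r / gridm d (n - j.val)) ^ (d:ℝ)) * q j.val Set.univ :=
          lintegral_const _
      _ = ENNReal.ofReal ((2 * r / gridm d (n - j.val)) ^ (d:ℝ)) * (n:ℝ≥0∞)⁻¹ := by
          rw [(key j.val j.isLt).1]
  -- numeric bound
  have hnum : (∑ j : Fin n, ENNReal.ofReal ((2 * r / gridm d (n - j.val)) ^ (d:ℝ)) * (n:ℝ≥0∞)⁻¹)
      ≤ ENNReal.ofReal ((4 * r) ^ (d:ℝ) * ((1 + Real.log n) / n)) := by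
    have hnR : (0:ℝ) < n := by exact_mod_cast hn
    have hinv : ((n:ℝ≥0∞))⁻¹ = ENNReal.ofReal ((n:ℝ)⁻¹) := by
      rw [ENNReal.ofReal_inv_of_pos hnR, ENNReal.ofReal_natCast]
    have hterm : ∀ j : Fin n,
        ENNReal.ofReal ((2 * r / gridm d (n - j.val)) ^ (d:ℝ)) * (n:ℝ≥0∞)⁻¹
        = ENNReal.ofReal ((2 * r / gridm d (n - j.val)) ^ (d:ℝ) * (n:ℝ)⁻¹) := by
      intro j
      rw [hinv, ← ENNReal.ofReal_mul (by positivity)]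
    rw [Finset.sum_congr rfl fun j _ => hterm j, ← ENNReal.ofReal_sum_of_nonneg
      (fun j _ => by positivity)]
    apply ENNReal.ofReal_le_ofReal
    -- real inequality
    have hB : ∀ j : Fin n, (2 * r / gridm d (n - j.val)) ^ (d:ℝ) * (n:ℝ)⁻¹
        ≤ (4 * r) ^ (d:ℝ) / ((n - j.val : ℕ):ℝ) * (n:ℝ)⁻¹ := by
      intro j
      have hk1 : 1 ≤ n - j.val := by have := j.isLt; omega
      have hkpos : (0:ℝ) < ((n - j.val : ℕ):ℝ) := by exact_mod_cast hk1
      have hkr : (0:ℝ) < ((n - j.val : ℕ):ℝ) ^ ((1:ℝ)/d) := Real.rpow_pos_of_pos hkpos _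
      have hgm : (0:ℝ) < (gridm d (n - j.val) : ℝ) := by
        exact_mod_cast one_le_gridm d (n - j.val)
      have h2 : 2 * r / (gridm d (n - j.val) : ℝ)
          ≤ 4 * r / ((n - j.val : ℕ):ℝ) ^ ((1:ℝ)/d) := by
        rw [div_le_div_iff₀ hgm hkr]
        have h3 := rpow_le_two_mul_gridm (d := d) (k := n - j.val) hd hk1
        nlinarith
      have h4 : (2 * r / (gridm d (n - j.val) : ℝ)) ^ (d:ℝ)
          ≤ (4 * r / ((n - j.val : ℕ):ℝ) ^ ((1:ℝ)/d)) ^ (d:ℝ) :=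
        Real.rpow_le_rpow (by positivity) h2 (by positivity)
      have h5 : (4 * r / ((n - j.val : ℕ):ℝ) ^ ((1:ℝ)/d)) ^ (d:ℝ)
          = (4 * r) ^ (d:ℝ) / ((n - j.val : ℕ):ℝ) := by
        rw [Real.div_rpow (by positivity) (by positivity)]
        congr 1
        rw [← Real.rpow_mul hkpos.le]
        rw [show (1:ℝ)/d * d = 1 by field_simp, Real.rpow_one]
      exact mul_le_mul_of_nonneg_right (h4.trans h5.le) (by positivity)
    calc ∑ j : Fin n, (2 * r / gridm d (n - j.val)) ^ (d:ℝ) * (n:ℝ)⁻¹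
        ≤ ∑ j : Fin n, (4 * r) ^ (d:ℝ) / ((n - j.val : ℕ):ℝ) * (n:ℝ)⁻¹ :=
          Finset.sum_le_sum fun j _ => hB j
      _ = (∑ j ∈ Finset.range n, (4 * r) ^ (d:ℝ) / ((n - j : ℕ):ℝ)) * (n:ℝ)⁻¹ := by
          rw [← Finset.sum_mul, Fin.sum_univ_eq_sum_range
            (fun j => (4 * r) ^ (d:ℝ) / ((n - j : ℕ):ℝ))]
      _ ≤ ((4 * r) ^ (d:ℝ) * (1 + Real.log n)) * (n:ℝ)⁻¹ := by
          apply mul_le_mul_of_nonneg_right _ (by positivity)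
          have hre : ∑ j ∈ Finset.range n, (4 * r) ^ (d:ℝ) / ((n - j : ℕ):ℝ)
              = ∑ j ∈ Finset.range n, (4 * r) ^ (d:ℝ) / ((j + 1 : ℕ):ℝ) := by
            rw [← Finset.sum_range_reflect (fun i => (4 * r) ^ (d:ℝ) / ((i + 1 : ℕ):ℝ)) n]
            apply Finset.sum_congr rfl
            intro j hj
            have hj' : j < n := Finset.mem_range.mp hj
            congr 2
            omega
          rw [hre]
          have hharm : ∑ j ∈ Finset.range n, ((4 * r) ^ (d:ℝ) / ((j + 1 : ℕ):ℝ))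
              = (4 * r) ^ (d:ℝ) * ∑ j ∈ Finset.range n, (((j + 1 : ℕ):ℝ))⁻¹ := by
            rw [Finset.mul_sum]
            apply Finset.sum_congr rfl
            intro j _
            rw [div_eq_mul_inv]
          rw [hharm]
          apply mul_le_mul_of_nonneg_left _ (by positivity)
          have h6 : ∑ j ∈ Finset.range n, (((j + 1 : ℕ):ℝ))⁻¹ = (harmonic n : ℝ) := by
            rw [harmonic]
            push_cast
            rfl
          rw [h6]
          exact harmonic_le_one_add_log n
      _ = (4 * r) ^ (d:ℝ) * ((1 + Real.log n) / n) := by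
          rw [div_eq_mul_inv]; ring
  -- put it together
  have hW : WpCost (d : ℝ) ((n : ℝ≥0∞)⁻¹ • ∑ k, Measure.dirac (x k)) ρ
      ≤ ENNReal.ofReal ((4 * r) ^ (d:ℝ) * ((1 + Real.log n) / n)) := by
    refine le_trans (iInf_le_of_le π (iInf_le_of_le hfst (iInf_le_of_le hsnd le_rfl))) ?_
    exact hcost.trans hnum
  have hd0 : (0:ℝ) ≤ 1/d := by positivity
  calc (WpCost (d : ℝ) ((n : ℝ≥0∞)⁻¹ • ∑ k, Measure.dirac (x k)) ρ) ^ ((1:ℝ)/d)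
      ≤ (ENNReal.ofReal ((4 * r) ^ (d:ℝ) * ((1 + Real.log n) / n))) ^ ((1:ℝ)/d) :=
        ENNReal.rpow_le_rpow hW hd0
    _ = ENNReal.ofReal (((4 * r) ^ (d:ℝ) * ((1 + Real.log n) / n)) ^ ((1:ℝ)/d)) :=
        ENNReal.ofReal_rpow_of_nonneg (by positivity) hd0
    _ = ENNReal.ofReal (4 * r * ((1 + Real.log n) / n) ^ ((1:ℝ)/d)) := by
        congr 1
        have hlog : (0:ℝ) ≤ 1 + Real.log n := by
          have : (0:ℝ) ≤ Real.log n := Real.log_nonneg (by exact_mod_cast hn)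
          linarith
        have hnn : (0:ℝ) ≤ (1 + Real.log n) / n := by positivity
        rw [Real.mul_rpow (by positivity) hnn]
        congr 1
        rw [← Real.rpow_mul (by positivity : (0:ℝ) ≤ 4 * r)]
        rw [show (d:ℝ) * (1/d) = 1 by field_simp, Real.rpow_one]
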